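/- Let i ≠ i* be a sub-optimal arm, let n ≥ 1 and let u be an integer with 1 ≤ u ≤ n, and let τ be any real number. Pointwise on the sample space: if U_{i,u,t} ≤ τ for every integer t with u ≤ t ≤ n, and U_{i*,s,u+s} > τ for every integer s with 1 ≤ s ≤ n − u, then T_i(n) ≤ u. -/

import Mathlib

open MeasureTheory ProbabilityTheory Finset

noncomputable section

/-- Empirical average `X̄_{i,n} = (1/n) ∑_{t=1}^n X_{i,t}` of the first `n` rewards of arm `i`. -/
def empAvg {Ω : Type*} {K : ℕ} (X : Fin K → ℕ → Ω → ℝ) (i : Fin K) (n : ℕ) (ω : Ω) : ℝ :=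
  (∑ t ∈ Finset.Icc 1 n, X i t ω) / n

/-- Bonus term `B_{t,s} = β^{1/ξ} t^{α/ξ} / s^{1-η}`. -/
def bonus (β ξ α η : ℝ) (t s : ℕ) : ℝ :=
  β ^ (1 / ξ) * (t : ℝ) ^ (α / ξ) / (s : ℝ) ^ (1 - η)

/-- Upper confidence index `U_{i,s,t} = X̄_{i,s} + B_{t,s}`. -/
def ucbIdx {Ω : Type*} {K : ℕ} (X : Fin K → ℕ → Ω → ℝ) (β ξ α η : ℝ)
    (i : Fin K) (s t : ℕ) (ω : Ω) : ℝ :=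
  empAvg X i s ω + bonus β ξ α η t s

/-- `T_i(t) = ∑_{l=1}^t 1{I_l = i}`, the number of plays of arm `i` up to (and including)
time `t`. -/
def playCount {Ω : Type*} {K : ℕ} (I : ℕ → Ω → Fin K) (i : Fin K) (t : ℕ) (ω : Ω) : ℕ :=
  ((Finset.Icc 1 t).filter fun l => I l ω = i).card

/-- The `EReal`-valued index `X̄_{i,T_i(t)} + B_{t,T_i(t)}` used by the UCB policy at the end
of time `t`, with the convention that the index is `+∞` when `T_i(t) = 0`
(i.e. `B_{t,0} = +∞`). -/
def ucbIdxE {Ω : Type*} {K : ℕ} (X : Fin K → ℕ → Ω → ℝ) (β ξ α η : ℝ)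
    (I : ℕ → Ω → Fin K) (j : Fin K) (t : ℕ) (ω : Ω) : EReal :=
  if playCount I j t ω = 0 then ⊤
  else ((ucbIdx X β ξ α η j (playCount I j t ω) t ω : ℝ) : EReal)

section AuxLemmas
variable {Ω' : Type*} {K' : ℕ}

theorem aux_playCount_succ (I : ℕ → Ω' → Fin K') (j : Fin K') (t : ℕ) (ω : Ω') :
    playCount I j (t + 1) ω = playCount I j t ω + (if I (t+1) ω = j then 1 else 0) := by
  unfold playCount
  rw [← Finset.insert_Icc_right_eq_Icc_add_one (by omega), Finset.filter_insert]
  split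
  · rw [Finset.card_insert_of_notMem (by simp)]
  · simp

theorem aux_playCount_le (I : ℕ → Ω' → Fin K') (j : Fin K') (t : ℕ) (ω : Ω') :
    playCount I j t ω ≤ t :=
  le_trans (Finset.card_filter_le _ _) (by simp)

theorem aux_playCount_add_le (I : ℕ → Ω' → Fin K') {j j' : Fin K'} (hjj : j ≠ j')
    (t : ℕ) (ω : Ω') : playCount I j t ω + playCount I j' t ω ≤ t := by
  unfold playCount
  rw [← Finset.card_union_of_disjoint]
  · calc _ ≤ (Finset.Icc 1 t).card := Finset.card_le_card (by
        intro x hx; simp only [Finset.mem_union, Finset.mem_filter] at hx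
        rcases hx with h | h <;> exact h.1)
    _ = t := by simp
  · apply Finset.disjoint_filter_filter'
    exact Set.disjoint_left.2 (by intro x hx hx'; exact hjj (hx.symm ▸ hx'.symm ▸ rfl))

theorem aux_bonus_mono (β ξ α η : ℝ) (hβ : 1 < β) (hξ : 0 < ξ) (hα : 0 < α)
    {t t' s : ℕ} (h : t ≤ t') (hs : 0 < s) :
    bonus β ξ α η t s ≤ bonus β ξ α η t' s := by
  unfold bonus
  have hsp : (0:ℝ) < (s : ℝ) ^ (1 - η) :=
    Real.rpow_pos_of_pos (by exact_mod_cast hs) _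
  have hb : (0:ℝ) ≤ β ^ (1 / ξ) := Real.rpow_nonneg (by linarith) _
  have ht : ((t:ℝ)) ^ (α / ξ) ≤ ((t':ℝ)) ^ (α / ξ) :=
    Real.rpow_le_rpow (Nat.cast_nonneg t) (by exact_mod_cast h)
      (le_of_lt (div_pos hα hξ))
  gcongr

end AuxLemmas

/-- Pointwise: if the index of arm `i` at play count `u` never exceeds `τ` between times `u`
and `n`, while the optimal arm's index always exceeds `τ`, then `T_i(n) ≤ u`. -/
theorem ucb_playCount_le_of_indices
    {Ω : Type*} [MeasurableSpace Ω] (P : Measure Ω) [IsProbabilityMeasure P]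
    (K : ℕ) (hK : 2 ≤ K) (R : ℝ) (hR : 0 < R)
    (X : Fin K → ℕ → Ω → ℝ)
    (hXmeas : ∀ i t, Measurable (X i t))
    (hXbdd : ∀ i t ω, |X i t ω| ≤ R)
    (μ : Fin K → ℝ)
    (hconv : ∀ i, Filter.Tendsto (fun n => ∫ ω, empAvg X i n ω ∂P)
      Filter.atTop (nhds (μ i)))
    (β ξ η α : ℝ) (hβ : 1 < β) (hξ : 0 < ξ) (hη : 1 / 2 ≤ η) (hη' : η < 1) (hα : 0 < α)
    (istar : Fin K) (hopt : ∀ j, j ≠ istar → μ j < μ istar)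
    (I : ℕ → Ω → Fin K)
    (hImeas : ∀ t, Measurable (I t))
    (hPolicy : ∀ t : ℕ, 1 ≤ t → ∀ ω : Ω, ∀ j : Fin K,
      ucbIdxE X β ξ α η I j (t - 1) ω ≤ ucbIdxE X β ξ α η I (I t ω) (t - 1) ω)
    (i : Fin K) (hi : i ≠ istar)
    (n u : ℕ) (hu1 : 1 ≤ u) (hun : u ≤ n) (τ : ℝ) :
    ∀ ω : Ω,
      (∀ t : ℕ, u ≤ t → t ≤ n → ucbIdx X β ξ α η i u t ω ≤ τ) →
      (∀ s : ℕ, 1 ≤ s → s ≤ n - u → ucbIdx X β ξ α η istar s (u + s) ω > τ) →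
      playCount I i n ω ≤ u := by
  
  intro ω h1 h2
  by_contra hgt
  push_neg at hgt
  classical
  have hex : ∃ t, u + 1 ≤ playCount I i t ω := ⟨n, hgt⟩
  set t := Nat.find hex with htdef
  have htprop : u + 1 ≤ playCount I i t ω := Nat.find_spec hex
  have htn : t ≤ n := Nat.find_le hgt
  have ht1 : 1 ≤ t := by
    by_contra h0
    have : t = 0 := by omega
    rw [this] at htprop
    simp [playCount] at htprop
  have hmin : playCount I i (t - 1) ω ≤ u := by
    by_contra hc
    push_neg at hc
    exact Nat.find_min hex (by omega : t - 1 < t) hc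
  have hstep : playCount I i t ω
      = playCount I i (t - 1) ω + (if I t ω = i then 1 else 0) := by
    obtain ⟨m, hm⟩ : ∃ m, t = m + 1 := ⟨t - 1, by omega⟩
    rw [hm]
    simpa using aux_playCount_succ I i m ω
  have hIt : I t ω = i := by
    by_contra hc
    rw [if_neg hc] at hstep
    omega
  have hcnt : playCount I i (t - 1) ω = u := by
    rw [if_pos hIt] at hstep
    omega
  have hut : u ≤ t - 1 := hcnt ▸ aux_playCount_le I i (t - 1) ω
  have hpol := hPolicy t ht1 ω istar
  rw [hIt] at hpol
  unfold ucbIdxE at hpol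
  rw [hcnt, if_neg (by omega : ¬ u = 0)] at hpol
  set s := playCount I istar (t - 1) ω with hsdef
  by_cases hs0 : s = 0
  · rw [if_pos hs0] at hpol
    exact absurd hpol (by simp)
  · rw [if_neg hs0] at hpol
    rw [EReal.coe_le_coe_iff] at hpol
    have hsum : u + s ≤ t - 1 := by
      have := aux_playCount_add_le I hi (t - 1) ω
      omega
    have hsn : s ≤ n - u := by omega
    have hτ : τ < ucbIdx X β ξ α η istar s (u + s) ω := h2 s (by omega) hsn
    have hmono : ucbIdx X β ξ α η istar s (u + s) ω
        ≤ ucbIdx X β ξ α η istar s (t - 1) ω := by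
      unfold ucbIdx
      exact add_le_add le_rfl (aux_bonus_mono β ξ α η hβ hξ hα hsum (by omega))
    have hle : ucbIdx X β ξ α η i u (t - 1) ω ≤ τ := h1 (t - 1) hut (by omega)
    linarith
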